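/- Assume n ≥ 2, u* ∈ bd K_{n+1}, H ∩ int K_{n+1} = ∅, and H ∩ bd K_{n+1} = {u*}. Then for every u ∈ H with u ≠ u*, the unique nearest point of K_{n+1} to u (i.e., the unique v ∈ K_{n+1} with ‖u − v‖ ≤ ‖u − w‖ for all w ∈ K_{n+1}) is not equal to u*. -/

import Mathlib

/-- Euclidean norm of the tail `x₁` of `x = (x₀; x₁) ∈ ℝ × ℝⁿ`. -/
noncomputable def tailNorm {n : ℕ} (x : EuclideanSpace ℝ (Fin (n + 1))) : ℝ :=
  Real.sqrt (∑ i : Fin n, x i.succ ^ 2)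

/-- The second-order cone `K_{n+1} = {(x₀; x₁) : ‖x₁‖ ≤ x₀}`. -/
def soc (n : ℕ) : Set (EuclideanSpace ℝ (Fin (n + 1))) :=
  {x | tailNorm x ≤ x 0}

/-- The boundary of the second-order cone: `{(x₀; x₁) : ‖x₁‖ = x₀}`. -/
def socBd (n : ℕ) : Set (EuclideanSpace ℝ (Fin (n + 1))) :=
  {x | tailNorm x = x 0}

/-- The interior of the second-order cone: `{(x₀; x₁) : ‖x₁‖ < x₀}`. -/
def socInt (n : ℕ) : Set (EuclideanSpace ℝ (Fin (n + 1))) :=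
  {x | tailNorm x < x 0}

/-- `x̂ = (x₀; −x₁)` for `x = (x₀; x₁)`. -/
def socHat {n : ℕ} (x : EuclideanSpace ℝ (Fin (n + 1))) : EuclideanSpace ℝ (Fin (n + 1)) :=
  WithLp.toLp 2 (fun i => if i = 0 then x 0 else -(x i))

/-- `B t` viewed as an element of Euclidean space. -/
def mvE {m p : ℕ} (B : Matrix (Fin m) (Fin p) ℝ) (t : Fin p → ℝ) : EuclideanSpace ℝ (Fin m) :=
  WithLp.toLp 2 (fun i => B.mulVec t i)

/-- A Euclidean vector viewed as a plain function. -/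
def toFun {m : ℕ} (x : EuclideanSpace ℝ (Fin m)) : Fin m → ℝ := x

/-- Assume `n ≥ 2`, `u* ∈ bd K_{n+1}`, `H ∩ int K_{n+1} = ∅`, and `H ∩ bd K_{n+1} = {u*}`,
where `H = {u* + B t : t ∈ ℝ^p}` with `Bᵀ B = I_p`. Then for every `u ∈ H` with `u ≠ u*`,
the unique nearest point of `K_{n+1}` to `u` is not equal to `u*`. -/
def tl {n : ℕ} (x : EuclideanSpace ℝ (Fin (n + 1))) : EuclideanSpace ℝ (Fin n) :=
  WithLp.toLp 2 (fun i => x i.succ)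

lemma tailNorm_eq_norm_tl {n : ℕ} (x : EuclideanSpace ℝ (Fin (n + 1))) :
    tailNorm x = ‖tl x‖ := by
  simp [tailNorm, EuclideanSpace.norm_eq, tl, sq_abs]

lemma inner_split {n : ℕ} (x y : EuclideanSpace ℝ (Fin (n + 1))) :
    (inner ℝ x y : ℝ) = x 0 * y 0 + (inner ℝ (tl x) (tl y) : ℝ) := by
  simp [PiLp.inner_apply, RCLike.inner_apply, tl, Fin.sum_univ_succ, mul_comm]

lemma soc_convex (n : ℕ) : Convex ℝ (soc n) := by
  intro x hx y hy a b ha hb hab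
  have hx' : tailNorm x ≤ x 0 := hx
  have hy' : tailNorm y ≤ y 0 := hy
  have h1 : tl (a • x + b • y) = a • tl x + b • tl y := rfl
  have h2 : (a • x + b • y) 0 = a * x 0 + b * y 0 := rfl
  show tailNorm (a • x + b • y) ≤ (a • x + b • y) 0
  rw [tailNorm_eq_norm_tl, h1, h2]
  calc ‖a • tl x + b • tl y‖ ≤ ‖a • tl x‖ + ‖b • tl y‖ := norm_add_le _ _
    _ = a * ‖tl x‖ + b * ‖tl y‖ := by
        rw [norm_smul, norm_smul, Real.norm_eq_abs, Real.norm_eq_abs,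
          abs_of_nonneg ha, abs_of_nonneg hb]
    _ ≤ a * x 0 + b * y 0 := by
        rw [tailNorm_eq_norm_tl] at hx' hy'
        have := mul_le_mul_of_nonneg_left hx' ha
        have := mul_le_mul_of_nonneg_left hy' hb
        linarith

theorem stmt4 (n p : ℕ) (hn : 2 ≤ n)
    (B : Matrix (Fin (n + 1)) (Fin p) ℝ) (hB : B.transpose * B = 1)
    (ustar : EuclideanSpace ℝ (Fin (n + 1))) (hustar : ustar ∈ socBd n)
    (H : Set (EuclideanSpace ℝ (Fin (n + 1))))
    (hH : H = {u | ∃ t : Fin p → ℝ, u = ustar + mvE B t})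
    (hdisj : H ∩ socInt n = ∅)
    (hsingle : H ∩ socBd n = {ustar}) :
    ∀ u ∈ H, u ≠ ustar →
      ∀ v ∈ soc n, (∀ w ∈ soc n, ‖u - v‖ ≤ ‖u - w‖) → v ≠ ustar := by
  intro u hu hune v hv hmin heq
  subst heq
  -- v = ustar
  have hustar' : tailNorm v = v 0 := hustar
  -- the projection characterization
  haveI hnon : Nonempty ↑(soc n) := ⟨⟨v, hv⟩⟩
  have hbdd : BddBelow (Set.range fun w : soc n => ‖u - (w : EuclideanSpace ℝ (Fin (n + 1)))‖) :=
    ⟨0, by rintro x ⟨w, rfl⟩; exact norm_nonneg _⟩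
  have hproj : ‖u - v‖ = ⨅ w : soc n, ‖u - (w : EuclideanSpace ℝ (Fin (n + 1)))‖ := by
    refine le_antisymm (le_ciInf fun w => hmin w w.2) ?_
    exact ciInf_le hbdd ⟨v, hv⟩
  have hVI : ∀ w ∈ soc n, (inner ℝ (u - v) (w - v) : ℝ) ≤ 0 :=
    (norm_eq_iInf_iff_real_inner_le_zero (soc_convex n) hv).mp hproj
  set d : EuclideanSpace ℝ (Fin (n + 1)) := u - v with hd
  have hdne : d ≠ 0 := sub_ne_zero.mpr hune
  -- ⟪d, ustar⟫ = 0
  have h0K : (0 : EuclideanSpace ℝ (Fin (n + 1))) ∈ soc n := by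
    show tailNorm 0 ≤ (0 : EuclideanSpace ℝ (Fin (n + 1))) 0
    rw [tailNorm_eq_norm_tl]
    have : tl (0 : EuclideanSpace ℝ (Fin (n + 1))) = 0 := rfl
    simp [this]
  have h2K : (2 : ℝ) • v ∈ soc n := by
    show tailNorm ((2 : ℝ) • v) ≤ ((2 : ℝ) • v) 0
    have h1 : tl ((2 : ℝ) • v) = (2 : ℝ) • tl v := rfl
    have h2 : ((2 : ℝ) • v) 0 = 2 * v 0 := rfl
    rw [tailNorm_eq_norm_tl, h1, h2, norm_smul]
    have hv' : tailNorm v ≤ v 0 := hv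
    rw [tailNorm_eq_norm_tl] at hv'
    have h3 : ‖(2 : ℝ)‖ = 2 := by norm_num
    rw [h3]
    linarith
  have hip0 : (inner ℝ d v : ℝ) = 0 := by
    have ha := hVI 0 h0K
    have hb := hVI ((2 : ℝ) • v) h2K
    rw [zero_sub, inner_neg_right] at ha
    have h2v : (2 : ℝ) • v - v = v := by rw [two_smul]; abel
    rw [h2v] at hb
    linarith
  -- d₀ ≤ 0
  have he0K : (WithLp.toLp 2 (fun i => if i = 0 then (1 : ℝ) else 0) : EuclideanSpace ℝ (Fin (n + 1))) ∈ soc n := by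
    show tailNorm _ ≤ _
    rw [tailNorm_eq_norm_tl]
    have h1 : tl (WithLp.toLp 2 (fun i => if i = 0 then (1 : ℝ) else 0) : EuclideanSpace ℝ (Fin (n + 1))) = 0 := by
      ext i
      simp [tl, Fin.succ_ne_zero]
    rw [h1]
    simp
  have hd0 : d 0 ≤ 0 := by
    have := hVI _ he0K
    rw [inner_sub_right, hip0, sub_le_iff_le_add, zero_add, inner_split] at this
    have h1 : tl (WithLp.toLp 2 (fun i => if i = 0 then (1 : ℝ) else 0) : EuclideanSpace ℝ (Fin (n + 1))) = 0 := by
      ext i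
      simp [tl, Fin.succ_ne_zero]
    rw [h1] at this
    simpa using this
  -- ‖tl d‖ ≤ -d₀
  have hwdK : (WithLp.toLp 2 (fun i => if i = 0 then tailNorm d else d i) : EuclideanSpace ℝ (Fin (n + 1))) ∈ soc n := by
    show tailNorm _ ≤ _
    have h1 : tl (WithLp.toLp 2 (fun i => if i = 0 then tailNorm d else d i) : EuclideanSpace ℝ (Fin (n + 1))) = tl d := by
      ext i
      simp [tl, Fin.succ_ne_zero]
    rw [tailNorm_eq_norm_tl, h1, ← tailNorm_eq_norm_tl]
    simp
  have htd : ‖tl d‖ ≤ -(d 0) := by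
    have h := hVI _ hwdK
    rw [inner_sub_right, hip0, sub_le_iff_le_add, zero_add, inner_split] at h
    have h1 : tl (WithLp.toLp 2 (fun i => if i = 0 then tailNorm d else d i) : EuclideanSpace ℝ (Fin (n + 1))) = tl d := by
      ext i
      simp [tl, Fin.succ_ne_zero]
    rw [h1] at h
    have h2 : (inner ℝ (tl d) (tl d) : ℝ) = ‖tl d‖ ^ 2 := real_inner_self_eq_norm_sq _
    rw [h2] at h
    norm_num at h
    rw [tailNorm_eq_norm_tl] at h
    -- h : d 0 * ‖tl d‖ + ‖tl d‖ ^ 2 ≤ 0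
    have hnn : (0 : ℝ) ≤ ‖tl d‖ := norm_nonneg _
    nlinarith [hnn, hd0, h]
  -- ustar - d ∈ soc n
  have hx0 : ‖tl v‖ = v 0 := by rw [← tailNorm_eq_norm_tl]; exact hustar'
  have hx0nn : (0 : ℝ) ≤ v 0 := by rw [← hx0]; exact norm_nonneg _
  have hipsplit : d 0 * v 0 + (inner ℝ (tl d) (tl v) : ℝ) = 0 := by
    rw [← inner_split]; exact hip0
  have hmemK : v - d ∈ soc n := by
    show tailNorm (v - d) ≤ (v - d) 0
    have h1 : tl (v - d) = tl v - tl d := rfl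
    have h2 : (v - d) 0 = v 0 - d 0 := rfl
    rw [tailNorm_eq_norm_tl, h1, h2]
    have hsq : ‖tl v - tl d‖ ^ 2 = ‖tl v‖ ^ 2 - 2 * (inner ℝ (tl v) (tl d) : ℝ) + ‖tl d‖ ^ 2 :=
      norm_sub_sq_real _ _
    have hcomm : (inner ℝ (tl v) (tl d) : ℝ) = (inner ℝ (tl d) (tl v) : ℝ) := real_inner_comm _ _
    nlinarith [norm_nonneg (tl v - tl d), norm_nonneg (tl d), hsq, hcomm, hipsplit, htd, hd0,
      hx0nn, hx0]
  -- ustar - d ∈ H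
  rw [hH] at hu
  obtain ⟨t, hut⟩ := hu
  have hdt : d = mvE B t := by rw [hd, hut]; abel
  have hmemH : v - d ∈ H := by
    rw [hH]
    refine ⟨-t, ?_⟩
    have hneg : mvE B (-t) = -mvE B t := by
      ext i
      simp [mvE, Matrix.mulVec_neg]
    rw [hneg, ← hdt]
    abel
  -- contradiction
  have hmemK' : tailNorm (v - d) ≤ (v - d) 0 := hmemK
  rcases lt_or_eq_of_le hmemK' with hlt | heq2
  · have : v - d ∈ H ∩ socInt n := ⟨hmemH, hlt⟩
    rw [hdisj] at this
    exact this
  · have : v - d ∈ H ∩ socBd n := ⟨hmemH, heq2⟩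
    rw [hsingle, Set.mem_singleton_iff] at this
    have : d = 0 := by
      have := sub_eq_self.mp this
      exact this
    exact hdne this
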